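/- Branching apartness in an LTS X holds between p and q if and only if branching apartness holds between p and q in the silent-step reflexive closure of X. -/

import Mathlib

variable {X A : Type*}

/-- The reflexive transitive closure of the silent step relation (`none` is τ). -/
def TauStar (step : Option A → X → X → Prop) : X → X → Prop :=
  Relation.ReflTransGen (step none)

/-- `Q` is a branching apartness: a symmetric relation closed under the τ-rule
and the visible-action rule. -/
def IsBApartRel (step : Option A → X → X → Prop) (Q : X → X → Prop) : Prop :=
  (∀ p q, Q p q → Q q p) ∧
  (∀ p p' q : X, step none p p' → Q p' q →
    (∀ q' q'', TauStar step q q' → step none q' q'' → Q p q' ∨ Q p' q'') → Q p q) ∧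
  (∀ (a : A) (p p' q : X), step (some a) p p' →
    (∀ q' q'', TauStar step q q' → step (some a) q' q'' → Q p q' ∨ Q p' q'') → Q p q)

/-- Branching apartness: the least branching apartness relation. -/
def BApart (step : Option A → X → X → Prop) (p q : X) : Prop :=
  ∀ Q : X → X → Prop, IsBApartRel step Q → Q p q

/-- The silent-step reflexive closure of an LTS: add `p →_τ p` for every state `p`. -/
def reflClosure (step : Option A → X → X → Prop) : Option A → X → X → Prop :=
  fun α p q => step α p q ∨ (α = none ∧ p = q)

/-- A (symmetric) branching bisimulation. -/
def Good (s : Option A → X → X → Prop) (R : X → X → Prop) : Prop :=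
  (∀ p q, R p q → R q p) ∧
  ∀ p q, R p q → ∀ α p', s α p p' →
    (α = none ∧ R p' q) ∨ ∃ q' q'', TauStar s q q' ∧ s α q' q'' ∧ R p q' ∧ R p' q''

/-- Branching bisimilarity. -/
def Bisim (s : Option A → X → X → Prop) (p q : X) : Prop := ∃ R, Good s R ∧ R p q

lemma bApart_iff_not_bisim (s : Option A → X → X → Prop) (p q : X) :
    BApart s p q ↔ ¬ Bisim s p q := by
  constructor
  · rintro h ⟨R, ⟨hsym, hmatch⟩, hpq⟩
    refine h (fun a b => ¬ R a b) ⟨?_, ?_, ?_⟩ hpq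
    · exact fun a b hne hba => hne (hsym b a hba)
    · intro p p' q hstep hp'q hside hRpq
      rcases hmatch p q hRpq none p' hstep with ⟨_, h'⟩ | ⟨q', q'', ht, hs, h1, h2⟩
      · exact hp'q h'
      · rcases hside q' q'' ht hs with h' | h' <;> [exact h' h1; exact h' h2]
    · intro a p p' q hstep hside hRpq
      rcases hmatch p q hRpq (some a) p' hstep with ⟨h', _⟩ | ⟨q', q'', ht, hs, h1, h2⟩
      · exact absurd h' (Option.some_ne_none a)
      · rcases hside q' q'' ht hs with h' | h' <;> [exact h' h1; exact h' h2]
  · intro h Q hQ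
    by_contra hnQ
    apply h
    refine ⟨fun a b => ¬ Q a b, ⟨?_, ?_⟩, hnQ⟩
    · exact fun a b hab hQba => hab (hQ.1 b a hQba)
    · intro p' q' hnQpq α p'' hstep
      by_contra hc
      push_neg at hc
      obtain ⟨hc1, hc2⟩ := hc
      have hside : ∀ r r', TauStar s q' r → s α r r' → Q p' r ∨ Q p'' r' := by
        intro r r' h1 h2
        by_contra hcc
        push_neg at hcc
        exact hcc.2 (hc2 r r' h1 h2 hcc.1)
      match α with
      | none => exact hnQpq (hQ.2.1 p' p'' q' hstep (hc1 rfl) hside)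
      | some a => exact hnQpq (hQ.2.2 a p' p'' q' hstep hside)

lemma tauStar_rc (s : Option A → X → X → Prop) (p q : X) :
    TauStar (reflClosure s) p q ↔ TauStar s p q := by
  constructor
  · intro h
    induction h with
    | refl => exact .refl
    | tail _ h2 ih =>
      rcases h2 with h2 | ⟨_, rfl⟩
      · exact ih.tail h2
      · exact ih
  · exact fun h => Relation.ReflTransGen.mono (fun a b hh => Or.inl hh) p q h

lemma good_follow {s : Option A → X → X → Prop} {R : X → X → Prop} (hR : Good s R) :
    ∀ p p', TauStar s p p' → ∀ q, R p q → ∃ q', TauStar s q q' ∧ R p' q' := by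
  intro p p' h
  induction h with
  | refl => exact fun q hq => ⟨q, .refl, hq⟩
  | tail _ hstep ih =>
    intro q hq
    obtain ⟨q₁, hq₁, hR1⟩ := ih q hq
    rcases hR.2 _ _ hR1 none _ hstep with ⟨_, h'⟩ | ⟨r, r', ht, hs, _, h2⟩
    · exact ⟨q₁, hq₁, h'⟩
    · exact ⟨r', hq₁.trans (ht.tail hs), h2⟩

lemma good_bisim (s : Option A → X → X → Prop) : Good s (Bisim s) := by
  constructor
  · rintro p q ⟨R, hR, h⟩
    exact ⟨R, hR, hR.1 _ _ h⟩
  · rintro p q ⟨R, hR, h⟩ α p' hs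
    rcases hR.2 p q h α p' hs with ⟨e, h'⟩ | ⟨q', q'', ht, hs', h1, h2⟩
    · exact Or.inl ⟨e, R, hR, h'⟩
    · exact Or.inr ⟨q', q'', ht, hs', ⟨R, hR, h1⟩, ⟨R, hR, h2⟩⟩

/-- Intermediate points on τ-paths between bisimilar states (for the reflexive
closure, where the stuttering argument is easy). -/
def Drel (s : Option A → X → X → Prop) (m u : X) : Prop :=
  ∃ a b, TauStar (reflClosure s) a m ∧ TauStar (reflClosure s) m b ∧
    Bisim (reflClosure s) a u ∧ Bisim (reflClosure s) b u

lemma good_S (s : Option A → X → X → Prop) :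
    Good (reflClosure s) (fun x y => Bisim (reflClosure s) x y ∨ Drel s x y ∨ Drel s y x) := by
  set rc := reflClosure s with hrc
  have hB := good_bisim rc
  constructor
  · rintro x y (h | h | h)
    · exact Or.inl (hB.1 _ _ h)
    · exact Or.inr (Or.inr h)
    · exact Or.inr (Or.inl h)
  · rintro x y (hxy | ⟨a, b, ham, hmb, hau, hbu⟩ | ⟨a, b, hay, hyb, hax, hbx⟩) α x' hstep
    · rcases hB.2 x y hxy α x' hstep with ⟨e, h'⟩ | ⟨q', q'', ht, hs', h1, h2⟩
      · exact Or.inl ⟨e, Or.inl h'⟩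
      · exact Or.inr ⟨q', q'', ht, hs', Or.inl h1, Or.inl h2⟩
    · -- x is an intermediate point: a ↠ x ↠ b, a ~ y, b ~ y
      obtain ⟨s₀, hys₀, hBx⟩ := good_follow hB a x ham y hau
      rcases hB.2 x s₀ hBx α x' hstep with ⟨e, h'⟩ | ⟨q', q'', ht, hs', h1, h2⟩
      · exact Or.inr ⟨s₀, s₀, hys₀, Or.inr ⟨e, rfl⟩, Or.inl hBx, Or.inl h'⟩
      · exact Or.inr ⟨q', q'', hys₀.trans ht, hs', Or.inl h1, Or.inl h2⟩
    · -- y is an intermediate point: a ↠ y ↠ b, a ~ x, b ~ x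
      have hxb : Bisim rc x b := hB.1 _ _ hbx
      rcases hB.2 x b hxb α x' hstep with ⟨e, h'⟩ | ⟨q', q'', ht, hs', h1, h2⟩
      · exact Or.inr ⟨b, b, hyb, Or.inr ⟨e, rfl⟩, Or.inl hxb, Or.inl h'⟩
      · exact Or.inr ⟨q', q'', hyb.trans ht, hs', Or.inl h1, Or.inl h2⟩

lemma bisim_iff (s : Option A → X → X → Prop) (p q : X) :
    Bisim s p q ↔ Bisim (reflClosure s) p q := by
  set rc := reflClosure s with hrc
  have hB := good_bisim rc
  constructor
  · rintro ⟨R, ⟨hsym, hmatch⟩, hpq⟩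
    refine ⟨R, ⟨hsym, ?_⟩, hpq⟩
    intro x y hxy α x' hstep
    rcases hstep with hstep | ⟨hα, rfl⟩
    · rcases hmatch x y hxy α x' hstep with ⟨e, h'⟩ | ⟨q', q'', ht, hs', h1, h2⟩
      · exact Or.inl ⟨e, h'⟩
      · exact Or.inr ⟨q', q'', (tauStar_rc s y q').mpr ht, Or.inl hs', h1, h2⟩
    · exact Or.inl ⟨hα, hxy⟩
  · intro hpq
    refine ⟨Bisim rc, ⟨hB.1, ?_⟩, hpq⟩
    intro x y hxy α x' hstep
    rcases hB.2 x y hxy α x' (Or.inl hstep) with ⟨e, h'⟩ | ⟨q', q'', ht, hs', h1, h2⟩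
    · exact Or.inl ⟨e, h'⟩
    · rcases hs' with hs' | ⟨hα, rfl⟩
      · exact Or.inr ⟨q', q'', (tauStar_rc s y q').mp ht, hs', h1, h2⟩
      · -- diagonal step: q'' = q', α = none; stuttering
        subst hα
        have ht' : TauStar s y q' := (tauStar_rc s y q').mp ht
        rcases ht'.cases_tail with rfl | ⟨c, hyc, hc⟩
        · exact Or.inl ⟨rfl, h2⟩
        · have hcp : Bisim rc c x :=
            ⟨_, good_S s, Or.inr (Or.inl ⟨y, q', (tauStar_rc s y c).mpr hyc,
              Relation.ReflTransGen.single (Or.inl hc), hB.1 _ _ hxy, hB.1 _ _ h1⟩)⟩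
          exact Or.inr ⟨c, q', hyc, hc, hB.1 _ _ hcp, h2⟩

theorem bApart_iff_bApart_reflClosure (step : Option A → X → X → Prop) (p q : X) :
    BApart step p q ↔ BApart (reflClosure step) p q := by
  rw [bApart_iff_not_bisim, bApart_iff_not_bisim, bisim_iff]
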